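/- Under the refactorization identity B₂(z)·B₁(z) = B̃₁(z)·B̃₂(z) for all z ∉ {z₁, z₂}, the zeros match: ζ̃₁ + ζ̃₂ = ζ₁ + ζ₂ and ζ̃₁·ζ̃₂ = ζ₁·ζ₂; consequently either (ζ̃₁, ζ̃₂) = (ζ₁, ζ₂) or (ζ̃₁, ζ̃₂) = (ζ₂, ζ₁). -/

import Mathlib

open Matrix

lemma exists_vecMulVec {r : ℕ} (G : Matrix (Fin r) (Fin r) ℂ) (h : G.rank = 1) :
    ∃ u v : Fin r → ℂ, G = vecMulVec u v := by
  have h1 : Module.finrank ℂ (LinearMap.range G.mulVecLin) = 1 := h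
  obtain ⟨u, -, hu⟩ := finrank_eq_one_iff'.mp h1
  choose c hc using hu
  refine ⟨(u : Fin r → ℂ), fun j => c ⟨G *ᵥ Pi.single j 1, ⟨Pi.single j 1, rfl⟩⟩, ?_⟩
  ext i j
  have h3 := congrArg (fun w : LinearMap.range G.mulVecLin => (w : Fin r → ℂ) i)
    (hc ⟨G *ᵥ Pi.single j 1, ⟨Pi.single j 1, rfl⟩⟩)
  simp only [Submodule.coe_smul, Pi.smul_apply, smul_eq_mul] at h3
  rw [vecMulVec_apply, mul_comm, h3]
  simp

lemma trace_vecMulVec_mul {r : ℕ} (u v : Fin r → ℂ) (B : Matrix (Fin r) (Fin r) ℂ) :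
    (vecMulVec u v * B).trace = v ⬝ᵥ (B *ᵥ u) := by
  simp only [trace, diag, mul_apply, vecMulVec_apply, dotProduct, mulVec]
  rw [Finset.sum_comm]
  simp [Finset.mul_sum, dotProduct]
  congr 1; ext k; congr 1; ext i; ring

lemma det_add_smul_rankOne {r : ℕ} (A G : Matrix (Fin r) (Fin r) ℂ)
    (hA : IsUnit A.det) (hG : G.rank = 1) (c : ℂ) :
    (A + c • G).det = A.det * (1 + c * (G * A⁻¹).trace) := by
  obtain ⟨u, v, rfl⟩ := exists_vecMulVec G hG
  have h1 : c • vecMulVec u v = replicateCol Unit (c • u) * replicateRow Unit v := by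
    rw [← vecMulVec_eq]; ext i j; simp [vecMulVec_apply]; ring
  rw [h1, det_add_replicateCol_mul_replicateRow (ι := Unit) hA (c • u) v]
  congr 1
  rw [det_unique]
  simp only [Matrix.add_apply, one_apply_eq, mul_apply, replicateRow_apply, replicateCol_apply, Fintype.sum_unique,
    Pi.smul_apply, smul_eq_mul]
  rw [trace_vecMulVec_mul]
  simp [mulVec, dotProduct, Finset.mul_sum, Finset.sum_mul, mul_apply]
  rw [Finset.sum_comm]
  congr 1; ext k; congr 1; ext i; ring

theorem refactorization_zeros_match
    (r : ℕ) (hr : 1 ≤ r)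
    (A G₁ G₂ Gt₁ Gt₂ : Matrix (Fin r) (Fin r) ℂ)
    (hA : IsUnit A.det)
    (hG₁ : G₁.rank = 1) (hG₂ : G₂.rank = 1)
    (hGt₁ : Gt₁.rank = 1) (hGt₂ : Gt₂.rank = 1)
    (z₁ z₂ ζ₁ ζ₂ ζt₁ ζt₂ : ℂ) (hz : z₁ ≠ z₂)
    (hζ₁ : (G₁ * A⁻¹).trace = z₁ - ζ₁) (hζ₂ : (G₂ * A⁻¹).trace = z₂ - ζ₂)
    (hζt₁ : (Gt₁ * A⁻¹).trace = z₁ - ζt₁) (hζt₂ : (Gt₂ * A⁻¹).trace = z₂ - ζt₂)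
    (hre : ∀ z : ℂ, z ≠ z₁ → z ≠ z₂ →
      (A + (z - z₂)⁻¹ • G₂) * (A + (z - z₁)⁻¹ • G₁) =
      (A + (z - z₁)⁻¹ • Gt₁) * (A + (z - z₂)⁻¹ • Gt₂)) :
    (ζt₁ + ζt₂ = ζ₁ + ζ₂ ∧ ζt₁ * ζt₂ = ζ₁ * ζ₂) ∧
    ((ζt₁ = ζ₁ ∧ ζt₂ = ζ₂) ∨ (ζt₁ = ζ₂ ∧ ζt₂ = ζ₁)) := by
  have hd : A.det ≠ 0 := hA.ne_zero
  have key : ∀ z : ℂ, z ≠ z₁ → z ≠ z₂ →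
      (z - ζ₁) * (z - ζ₂) = (z - ζt₁) * (z - ζt₂) := by
    intro z h1 h2
    have h1' : z - z₁ ≠ 0 := sub_ne_zero.mpr h1
    have h2' : z - z₂ ≠ 0 := sub_ne_zero.mpr h2
    have hdet := congrArg Matrix.det (hre z h1 h2)
    rw [det_mul, det_mul,
      det_add_smul_rankOne A G₂ hA hG₂, det_add_smul_rankOne A G₁ hA hG₁,
      det_add_smul_rankOne A Gt₁ hA hGt₁, det_add_smul_rankOne A Gt₂ hA hGt₂,
      hζ₁, hζ₂, hζt₁, hζt₂] at hdet
    have hcancel : (1 + (z - z₂)⁻¹ * (z₂ - ζ₂)) * (1 + (z - z₁)⁻¹ * (z₁ - ζ₁)) =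
        (1 + (z - z₁)⁻¹ * (z₁ - ζt₁)) * (1 + (z - z₂)⁻¹ * (z₂ - ζt₂)) := by
      exact mul_left_cancel₀ (mul_ne_zero hd hd)
        (show A.det * A.det * ((1 + (z - z₂)⁻¹ * (z₂ - ζ₂)) * (1 + (z - z₁)⁻¹ * (z₁ - ζ₁))) =
          A.det * A.det * ((1 + (z - z₁)⁻¹ * (z₁ - ζt₁)) * (1 + (z - z₂)⁻¹ * (z₂ - ζt₂))) by
          linear_combination hdet)
    field_simp at hcancel
    have := mul_right_cancel₀ (mul_ne_zero h1' h2')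
      (show (z - ζ₁) * (z - ζ₂) * ((z - z₁) * (z - z₂)) =
        (z - ζt₁) * (z - ζt₂) * ((z - z₁) * (z - z₂)) by linear_combination ((z - z₁) * (z - z₂)) * hcancel)
    exact this
  have hcompl : ({z₁, z₂} : Set ℂ)ᶜ.Infinite :=
    Set.Finite.infinite_compl (Set.toFinite _)
  obtain ⟨a, ha, b, hb, hab⟩ := hcompl.nontrivial
  simp only [Set.mem_compl_iff, Set.mem_insert_iff, Set.mem_singleton_iff, not_or] at ha hb
  have ka := key a ha.1 ha.2
  have kb := key b hb.1 hb.2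
  have hab' : a - b ≠ 0 := sub_ne_zero.mpr hab
  have hsum : ζt₁ + ζt₂ = ζ₁ + ζ₂ := by
    have h0 : (ζt₁ + ζt₂ - (ζ₁ + ζ₂)) * (a - b) = 0 := by linear_combination ka - kb
    rcases mul_eq_zero.mp h0 with h | h
    · exact sub_eq_zero.mp h
    · exact absurd h hab'
  have hprod : ζt₁ * ζt₂ = ζ₁ * ζ₂ := by linear_combination a * hsum - ka
  refine ⟨⟨hsum, hprod⟩, ?_⟩
  have hq : (ζt₁ - ζ₁) * (ζt₁ - ζ₂) = 0 := by linear_combination ζt₁ * hsum - hprod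
  rcases mul_eq_zero.mp hq with h | h
  · exact Or.inl ⟨sub_eq_zero.mp h, by linear_combination hsum - (sub_eq_zero.mp h)⟩
  · exact Or.inr ⟨sub_eq_zero.mp h, by linear_combination hsum - (sub_eq_zero.mp h)⟩
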